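/- Let n ≥ 1, j ≥ 1, and let s ∈ {0,…,n} with s > n/2. For every d ∈ {0,…,n}, the one-step kernels of the sequential (2j+1)-Majority and 2j-Majority processes satisfy P(X^{(2j+1)}_{t+1} ≥ d | X^{(2j+1)}_t = s) ≥ P(X^{(2j)}_{t+1} ≥ d | X^{(2j)}_t = s). -/
import Mathlib


open MeasureTheory Finset
open scoped ENNReal NNReal

noncomputable section

/-- Probability mass function of a binomial random variable `Bin(m, p)` at `k`. -/
def binomPMF (m k : ℕ) (p : ℝ) : ℝ := (m.choose k : ℝ) * p ^ k * (1 - p) ^ (m - k)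

/-- Tail probability `P(Bin(m, p) ≥ j)`. -/
def binomTail (m j : ℕ) (p : ℝ) : ℝ := ∑ k ∈ Finset.Icc j m, binomPMF m k p

/-- Cumulative distribution function `P(Bin(m, p) ≤ j)`. -/
def binomCDF (m j : ℕ) (p : ℝ) : ℝ := ∑ k ∈ Finset.range (j + 1), binomPMF m k p

/-- `majProb n j s` is the sample-majority probability `q_j(s)`: the probability that an
agent sampling `j` agents uniformly at random with replacement (when `s` of the `n` agents
hold opinion `a`) adopts opinion `a` under majority with uniform tie-breaking.
For odd `j = 2m+1` this is `P(Bin(2m+1, s/n) ≥ m+1)`; for even `j = 2m` it is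
`P(Bin(2m, s/n) ≥ m+1) + (1/2)·P(Bin(2m, s/n) = m)`. -/
def majProb (n j s : ℕ) : ℝ :=
  binomTail j (j / 2 + 1) ((s : ℝ) / n) +
    if Even j then (1 / 2) * binomPMF j (j / 2) ((s : ℝ) / n) else 0

/-- One-step transition kernel of the sequential `j`-Majority process on states `{0, …, n}`:
from state `s`, move to `s+1` with probability `((n-s)/n)·q_j(s)`, to `s-1` with probability
`(s/n)·(1-q_j(s))`, and stay at `s` otherwise. -/
def seqKernel (n j : ℕ) (s u : ℕ) : ℝ :=
  if u = s + 1 then (((n : ℝ) - s) / n) * majProb n j s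
  else if u + 1 = s then ((s : ℝ) / n) * (1 - majProb n j s)
  else if u = s then
    1 - (((n : ℝ) - s) / n) * majProb n j s - ((s : ℝ) / n) * (1 - majProb n j s)
  else 0

/-- One-step transition kernel of the gossip `j`-Majority process on states `{0, …, n}`:
from state `s`, the next state is distributed as `Bin(n, q_j(s))`. -/
def gossipKernel (n j : ℕ) (s u : ℕ) : ℝ := binomPMF n u (majProb n j s)

/-- `kernelTail K n s d` is the mass that the kernel `K` places, from state `s`,
on the set `{d, d+1, …, n}`, i.e. `P(X_{t+1} ≥ d | X_t = s)`. -/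
def kernelTail (K : ℕ → ℕ → ℝ) (n s d : ℕ) : ℝ := ∑ u ∈ Finset.Icc d n, K s u

/-- `IsMarkovChain μ K x X` states that, under the probability measure `μ`, the process
`X` is a Markov chain with one-step transition kernel `K` started at `x`: `X 0 = x`
almost surely, and conditionally on any finite path the next state is distributed
according to `K` applied to the current state. -/
def IsMarkovChain {Ω : Type*} [MeasurableSpace Ω] (μ : Measure Ω)
    (K : ℕ → ℕ → ℝ) (x : ℕ) (X : ℕ → Ω → ℕ) : Prop :=
  IsProbabilityMeasure μ ∧
  (∀ t, Measurable (X t)) ∧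
  μ {ω | X 0 ω = x} = 1 ∧
  ∀ (t : ℕ) (p : ℕ → ℕ) (u : ℕ),
    μ ({ω | X (t + 1) ω = u} ∩ {ω | ∀ i ≤ t, X i ω = p i}) =
      ENNReal.ofReal (K (p t) u) * μ {ω | ∀ i ≤ t, X i ω = p i}

/-- The convergence (hitting) time: the first time `t` with `X t ∈ {0, n}`
(`⊤` if the process never reaches a consensus state). -/
def hitTime {Ω : Type*} (n : ℕ) (X : ℕ → Ω → ℕ) (ω : Ω) : ℕ∞ :=
  ⨅ (t : ℕ) (_ : X t ω = 0 ∨ X t ω = n), (t : ℕ∞)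


lemma binomPMF_nonneg (m k : ℕ) {p : ℝ} (h0 : 0 ≤ p) (h1 : p ≤ 1) :
    0 ≤ binomPMF m k p := by
  unfold binomPMF
  have h2 : (0:ℝ) ≤ 1 - p := by linarith
  positivity

lemma binomPMF_succ (m k : ℕ) (hk : 1 ≤ k) (p : ℝ) :
    binomPMF (m + 1) k p = (1 - p) * binomPMF m k p + p * binomPMF m (k - 1) p := by
  obtain ⟨k', rfl⟩ : ∃ k', k = k' + 1 := ⟨k - 1, by omega⟩
  simp only [Nat.add_sub_cancel]
  unfold binomPMF
  rcases le_or_gt (k' + 1) m with h | h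
  · have h1 : m + 1 - (k' + 1) = (m - (k' + 1)) + 1 := by omega
    have h2 : m - k' = (m - (k' + 1)) + 1 := by omega
    rw [Nat.choose_succ_succ, h1, h2]
    push_cast
    ring
  · rcases le_or_gt (k' + 1) (m + 1) with h' | h'
    · have hm : m = k' := by omega
      subst hm
      simp [Nat.choose_succ_self, Nat.choose_self]
      ring
    · have e1 : m.choose (k' + 1) = 0 := Nat.choose_eq_zero_of_lt (by omega)
      have e2 : (m + 1).choose (k' + 1) = 0 := Nat.choose_eq_zero_of_lt (by omega)
      have e3 : m.choose k' = 0 := Nat.choose_eq_zero_of_lt (by omega)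
      simp [e1, e2, e3]

lemma binomTail_succ (m k : ℕ) (hk : 1 ≤ k) (hkm : k ≤ m) (p : ℝ) :
    binomTail (m + 1) k p = binomTail m k p + p * binomPMF m (k - 1) p := by
  obtain ⟨k', rfl⟩ : ∃ k', k = k' + 1 := ⟨k - 1, by omega⟩
  simp only [Nat.add_sub_cancel]
  unfold binomTail
  have hstep : ∀ i ∈ Finset.Icc (k' + 1) (m + 1),
      binomPMF (m + 1) i p = (1 - p) * binomPMF m i p + p * binomPMF m (i - 1) p := by
    intro i hi
    simp only [Finset.mem_Icc] at hi
    exact binomPMF_succ m i (by omega) p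
  rw [Finset.sum_congr rfl hstep, Finset.sum_add_distrib, ← Finset.mul_sum, ← Finset.mul_sum]
  have hA : ∑ i ∈ Finset.Icc (k' + 1) (m + 1), binomPMF m i p
      = ∑ i ∈ Finset.Icc (k' + 1) m, binomPMF m i p := by
    rw [Finset.sum_Icc_succ_top (by omega)]
    simp [binomPMF, Nat.choose_succ_self]
  have hB : ∑ i ∈ Finset.Icc (k' + 1) (m + 1), binomPMF m (i - 1) p
      = binomPMF m k' p + ∑ i ∈ Finset.Icc (k' + 1) m, binomPMF m i p := by
    have hmap : Finset.Icc (k' + 1) (m + 1)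
        = (Finset.Icc k' m).map (addRightEmbedding 1) := by
      rw [Finset.map_add_right_Icc]
    rw [hmap, Finset.sum_map]
    simp only [addRightEmbedding_apply, Nat.add_sub_cancel]
    rw [← Finset.Ioc_insert_left (show k' ≤ m by omega),
      Finset.sum_insert Finset.left_notMem_Ioc, ← Finset.Icc_add_one_left_eq_Ioc]
  rw [hA, hB]
  ring

lemma majProb_le (n j s : ℕ) (hn : 1 ≤ n) (hj : 1 ≤ j) (hs : s ≤ n) (hs2 : n < 2 * s) :
    majProb n (2 * j) s ≤ majProb n (2 * j + 1) s := by
  have hn' : (0:ℝ) < n := by exact_mod_cast hn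
  set p : ℝ := (s : ℝ) / n with hp
  have hp0 : 0 ≤ p := by positivity
  have hp1 : p ≤ 1 := by
    rw [hp, div_le_one hn']
    exact_mod_cast hs
  have hphalf : (1:ℝ) / 2 ≤ p := by
    rw [hp, div_le_div_iff₀ (by norm_num) hn']
    have : (n:ℝ) < 2 * s := by exact_mod_cast hs2
    linarith
  have hd1 : (2 * j + 1) / 2 = j := by omega
  have hd2 : (2 * j) / 2 = j := by omega
  have heven : Even (2 * j) := ⟨j, (two_mul j)⟩
  have hodd : ¬ Even (2 * j + 1) := by
    simp [Nat.even_add_one, heven]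
  unfold majProb
  rw [hd1, hd2, if_pos heven, if_neg hodd]
  have hrec := binomTail_succ (2 * j) (j + 1) (by omega) (by omega) p
  simp only [Nat.add_sub_cancel] at hrec
  rw [hrec]
  have hnn := binomPMF_nonneg (2 * j) j hp0 hp1
  nlinarith

lemma tail_gt (n j s d : ℕ) (hd : s + 1 < d) : kernelTail (seqKernel n j) n s d = 0 := by
  unfold kernelTail
  apply Finset.sum_eq_zero
  intro u hu
  simp only [Finset.mem_Icc] at hu
  unfold seqKernel
  rw [if_neg (by omega), if_neg (by omega), if_neg (by omega)]

lemma tail_succ_s (n j s : ℕ) (hd : s + 1 ≤ n) :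
    kernelTail (seqKernel n j) n s (s + 1) = (((n : ℝ) - s) / n) * majProb n j s := by
  unfold kernelTail
  rw [Finset.sum_eq_single (s + 1)]
  · simp [seqKernel]
  · intro u hu hne
    simp only [Finset.mem_Icc] at hu
    unfold seqKernel
    rw [if_neg (by omega), if_neg (by omega), if_neg (by omega)]
  · intro h
    exact absurd (Finset.mem_Icc.mpr ⟨le_refl _, hd⟩) h

lemma tail_eq_s (n j s : ℕ) (hn : 1 ≤ n) (hs : s ≤ n) :
    kernelTail (seqKernel n j) n s s = 1 - ((s : ℝ) / n) * (1 - majProb n j s) := by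
  have hsplit : Finset.Icc s n = insert s (Finset.Icc (s + 1) n) := by
    rw [Finset.Icc_add_one_left_eq_Ioc, Finset.Ioc_insert_left hs]
  unfold kernelTail
  rw [hsplit, Finset.sum_insert (by simp)]
  have hss : seqKernel n j s s
      = 1 - (((n : ℝ) - s) / n) * majProb n j s - ((s : ℝ) / n) * (1 - majProb n j s) := by
    unfold seqKernel
    rw [if_neg (by omega), if_neg (by omega), if_pos rfl]
  rw [hss]
  rcases le_or_gt (s + 1) n with h | h
  · have := tail_succ_s n j s h
    unfold kernelTail at this
    rw [this]
    ring
  · have hsn : s = n := by omega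
    have hempty : Finset.Icc (s + 1) n = ∅ := Finset.Icc_eq_empty (by omega)
    rw [hempty, Finset.sum_empty]
    have hz : ((n : ℝ) - s) / n = 0 := by rw [hsn, sub_self, zero_div]
    rw [hz]
    ring

lemma tail_lt_s (n j s d : ℕ) (hn : 1 ≤ n) (hs1 : 1 ≤ s) (hs : s ≤ n) (hd : d < s) :
    kernelTail (seqKernel n j) n s d = 1 := by
  unfold kernelTail
  have hsub : ∑ u ∈ Finset.Icc d n, seqKernel n j s u
      = ∑ u ∈ Finset.Icc (s - 1) n, seqKernel n j s u := by
    refine (Finset.sum_subset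
      (Finset.Icc_subset_Icc_left (show d ≤ s - 1 by omega)) ?_).symm
    intro u hu hnu
    simp only [Finset.mem_Icc] at hu hnu
    unfold seqKernel
    rw [if_neg (by omega), if_neg (by omega), if_neg (by omega)]
  rw [hsub]
  have hsplit : Finset.Icc (s - 1) n = insert (s - 1) (Finset.Icc s n) := by
    have h1 : Finset.Icc s n = Finset.Ioc (s - 1) n := by
      rw [← Finset.Icc_add_one_left_eq_Ioc]
      congr 1
      omega
    rw [h1, Finset.Ioc_insert_left (by omega)]
  rw [hsplit, Finset.sum_insert (by simp [Finset.mem_Icc]; omega)]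
  have h1 : seqKernel n j s (s - 1) = ((s : ℝ) / n) * (1 - majProb n j s) := by
    unfold seqKernel
    rw [if_neg (by omega), if_pos (by omega)]
  have h2 := tail_eq_s n j s hn hs
  unfold kernelTail at h2
  rw [h1, h2]
  ring

theorem stmt9 (n j s d : ℕ) (hn : 1 ≤ n) (hj : 1 ≤ j)
    (hs : s ≤ n) (hs2 : n < 2 * s) (hd : d ≤ n) :
    kernelTail (seqKernel n (2 * j)) n s d ≤ kernelTail (seqKernel n (2 * j + 1)) n s d := by
  have hs1 : 1 ≤ s := by omega
  have hn' : (0:ℝ) < n := by exact_mod_cast hn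
  have hq := majProb_le n j s hn hj hs hs2
  rcases lt_trichotomy d s with h | h | h
  · rw [tail_lt_s n (2 * j) s d hn hs1 hs h, tail_lt_s n (2 * j + 1) s d hn hs1 hs h]
  · subst h
    rw [tail_eq_s n (2 * j) d hn hs, tail_eq_s n (2 * j + 1) d hn hs]
    have hc : (0:ℝ) ≤ (d : ℝ) / n := by positivity
    nlinarith
  · rcases eq_or_lt_of_le (show s + 1 ≤ d by omega) with h' | h'
    · rw [← h']
      rw [tail_succ_s n (2 * j) s (h' ▸ hd), tail_succ_s n (2 * j + 1) s (h' ▸ hd)]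
      have hc : (0:ℝ) ≤ ((n : ℝ) - s) / n := by
        apply div_nonneg _ (le_of_lt hn')
        have : (s:ℝ) ≤ n := by exact_mod_cast hs
        linarith
      nlinarith
    · rw [tail_gt n (2 * j) s d h', tail_gt n (2 * j + 1) s d h']
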